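/- The inclusions = ⊆ =_□ ⊆ =_◇ hold among the absolute equality, the box equality, and the diamond equality on π-processes, and both inclusions are strict. -/

import Mathlib

set_option linter.unusedVariables false

/-! Core formalization of the π-calculus with name dichotomy.
Names are natural numbers; name variables are natural numbers (kept disjoint
via the sum-like type `NV`). -/

abbrev Name := ℕ

/-- Names and name variables. -/
inductive NV : Type
  | nm : Name → NV
  | vr : ℕ → NV
  deriving DecidableEq

/-- π-terms.  Input and output choices have a finite index set `Fin k`. -/
inductive Term : Type
  | nil : Term
  | inp : NV → ℕ → (k : ℕ) → (Fin k → Term) → Term          -- Σ_{i∈I} n(x).T_i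
  | out : NV → (k : ℕ) → (Fin k → NV) → (Fin k → Term) → Term -- Σ_{i∈I} n̄ m_i.T_i
  | par : Term → Term → Term
  | res : Name → Term → Term
  | mat : NV → NV → Term → Term
  | mis : NV → NV → Term → Term
  | repInp : NV → ℕ → Term → Term                             -- !n(x).T
  | repOut : NV → NV → Term → Term                            -- !n̄m.T

namespace NV

/-- Apply a map on variables. -/
def sub (σ : ℕ → NV) : NV → NV
  | nm a => nm a
  | vr x => σ x

/-- Apply a map on names. -/
def ren (α : Name → Name) : NV → NV
  | nm a => nm (α a)
  | vr x => vr x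

def vars : NV → Set ℕ
  | nm _ => ∅
  | vr x => {x}

def names : NV → Set Name
  | nm a => {a}
  | vr _ => ∅

end NV

namespace Term

/-- Apply a substitution (a map from name variables to names-or-variables),
    not substituting bound occurrences. -/
def applyVar (σ : ℕ → NV) : Term → Term
  | nil => nil
  | inp n x k Ts => inp (n.sub σ) x k (fun i => (Ts i).applyVar (Function.update σ x (NV.vr x)))
  | out n k ms Ts => out (n.sub σ) k (fun i => (ms i).sub σ) (fun i => (Ts i).applyVar σ)
  | par S T => par (S.applyVar σ) (T.applyVar σ)
  | res c T => res c (T.applyVar σ)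
  | mat p q T => mat (p.sub σ) (q.sub σ) (T.applyVar σ)
  | mis p q T => mis (p.sub σ) (q.sub σ) (T.applyVar σ)
  | repInp n x T => repInp (n.sub σ) x (T.applyVar (Function.update σ x (NV.vr x)))
  | repOut n m T => repOut (n.sub σ) (m.sub σ) (T.applyVar σ)

/-- Substitute the single name `c` for the name variable `x`: `T{c/x}`. -/
def subst1 (x : ℕ) (c : Name) (T : Term) : Term :=
  T.applyVar (fun y => if y = x then NV.nm c else NV.vr y)

/-- Apply an assignment (a total map from name variables to names). -/
def assign (ρ : ℕ → Name) (T : Term) : Term :=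
  T.applyVar (fun x => NV.nm (ρ x))

/-- Apply a renaming to all names of a term. -/
def applyName (α : Name → Name) : Term → Term
  | nil => nil
  | inp n x k Ts => inp (n.ren α) x k (fun i => (Ts i).applyName α)
  | out n k ms Ts => out (n.ren α) k (fun i => (ms i).ren α) (fun i => (Ts i).applyName α)
  | par S T => par (S.applyName α) (T.applyName α)
  | res c T => res (α c) (T.applyName α)
  | mat p q T => mat (p.ren α) (q.ren α) (T.applyName α)
  | mis p q T => mis (p.ren α) (q.ren α) (T.applyName α)
  | repInp n x T => repInp (n.ren α) x (T.applyName α)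
  | repOut n m T => repOut (n.ren α) (m.ren α) (T.applyName α)

/-- Free name variables. -/
def fvar : Term → Set ℕ
  | nil => ∅
  | inp n x k Ts => n.vars ∪ ((⋃ i, (Ts i).fvar) \ {x})
  | out n k ms Ts => n.vars ∪ (⋃ i, (ms i).vars ∪ (Ts i).fvar)
  | par S T => S.fvar ∪ T.fvar
  | res _ T => T.fvar
  | mat p q T => p.vars ∪ q.vars ∪ T.fvar
  | mis p q T => p.vars ∪ q.vars ∪ T.fvar
  | repInp n x T => n.vars ∪ (T.fvar \ {x})
  | repOut n m T => n.vars ∪ m.vars ∪ T.fvar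

/-- Global (non-local) names. -/
def gname : Term → Set Name
  | nil => ∅
  | inp n _ k Ts => n.names ∪ (⋃ i, (Ts i).gname)
  | out n k ms Ts => n.names ∪ (⋃ i, (ms i).names ∪ (Ts i).gname)
  | par S T => S.gname ∪ T.gname
  | res c T => T.gname \ {c}
  | mat p q T => p.names ∪ q.names ∪ T.gname
  | mis p q T => p.names ∪ q.names ∪ T.gname
  | repInp n _ T => n.names ∪ T.gname
  | repOut n m T => n.names ∪ m.names ∪ T.gname

end Term

/-- A π-process is a closed π-term. -/
def Closed (P : Term) : Prop := P.fvar = ∅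

def IsProc (P : Term) : Prop := Closed P

/-- Labels (external actions). -/
inductive Label : Type
  | inp : Name → Name → Label      -- ab
  | out : Name → Name → Label      -- āb
  | bout : Name → Name → Label     -- ā(c)
  deriving DecidableEq

def Label.names : Label → Set Name
  | .inp a b => {a, b}
  | .out a b => {a, b}
  | .bout a c => {a, c}

def Label.ren (α : Name → Name) : Label → Label
  | .inp a b => .inp (α a) (α b)
  | .out a b => .out (α a) (α b)
  | .bout a c => .bout (α a) (α c)

/-- Actions: internal action τ or a label. -/
inductive Act : Type
  | tau : Act
  | lab : Label → Act

def Act.names : Act → Set Name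
  | .tau => ∅
  | .lab ℓ => ℓ.names

def Act.ren (α : Name → Name) : Act → Act
  | .tau => .tau
  | .lab ℓ => .lab (ℓ.ren α)

/-- The labelled transition system of the π-calculus. -/
inductive Step : Term → Act → Term → Prop
  | inp {a : Name} {x : ℕ} {k : ℕ} {Ts : Fin k → Term} (i : Fin k) (c : Name) :
      Step (.inp (.nm a) x k Ts) (.lab (.inp a c)) ((Ts i).subst1 x c)
  | out {a : Name} {k : ℕ} {ms : Fin k → NV} {Ts : Fin k → Term} (i : Fin k) {c : Name}
      (h : ms i = .nm c) :
      Step (.out (.nm a) k ms Ts) (.lab (.out a c)) (Ts i)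
  | parR {S T T' : Term} {μ : Act} :
      Step T μ T' → Step (.par S T) μ (.par S T')
  | parL {S S' T : Term} {μ : Act} :
      Step S μ S' → Step (.par S T) μ (.par S' T)
  | commL {S S' T T' : Term} {a b : Name} :
      Step S (.lab (.inp a b)) S' → Step T (.lab (.out a b)) T' →
      Step (.par S T) .tau (.par S' T')
  | commR {S S' T T' : Term} {a b : Name} :
      Step S (.lab (.out a b)) S' → Step T (.lab (.inp a b)) T' →
      Step (.par S T) .tau (.par S' T')
  | closeL {S S' T T' : Term} {a c : Name} :
      Step S (.lab (.inp a c)) S' → Step T (.lab (.bout a c)) T' →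
      Step (.par S T) .tau (.res c (.par S' T'))
  | closeR {S S' T T' : Term} {a c : Name} :
      Step S (.lab (.bout a c)) S' → Step T (.lab (.inp a c)) T' →
      Step (.par S T) .tau (.res c (.par S' T'))
  | open_ {T T' : Term} {a c : Name} :
      Step T (.lab (.out a c)) T' → Step (.res c T) (.lab (.bout a c)) T'
  | resStep {T T' : Term} {μ : Act} {c : Name} :
      Step T μ T' → c ∉ μ.names → Step (.res c T) μ (.res c T')
  | matStep {T T' : Term} {μ : Act} {a : Name} :
      Step T μ T' → Step (.mat (.nm a) (.nm a) T) μ T'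
  | misStep {T T' : Term} {μ : Act} {a b : Name} :
      a ≠ b → Step T μ T' → Step (.mis (.nm a) (.nm b) T) μ T'
  | repOutStep {a b : Name} {T : Term} :
      Step (.repOut (.nm a) (.nm b) T) (.lab (.out a b)) (.par T (.repOut (.nm a) (.nm b) T))
  | repInpStep {a : Name} {x : ℕ} {T : Term} (b : Name) :
      Step (.repInp (.nm a) x T) (.lab (.inp a b)) (.par (T.subst1 x b) (.repInp (.nm a) x T))

/-- Internal action. -/
def Tau (P Q : Term) : Prop := Step P .tau Q

/-- `P ⟹ Q` : reflexive and transitive closure of τ. -/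
def WeakTau : Term → Term → Prop := Relation.ReflTransGen Tau

/-- `P ⇓` : observability. -/
def Obs (P : Term) : Prop := ∃ P' ℓ P'', WeakTau P P' ∧ Step P' (.lab ℓ) P''

abbrev PRel : Type := Term → Term → Prop

def OnProc (R : PRel) : Prop := ∀ P Q, R P Q → IsProc P ∧ IsProc Q

def ReflProc (R : PRel) : Prop := ∀ P, IsProc P → R P P

def Equipollent (R : PRel) : Prop := ∀ P Q, R P Q → (Obs P ↔ Obs Q)

def Extensional (R : PRel) : Prop :=
  (∀ L M P Q, R L M → R P Q → R (.par L P) (.par M Q)) ∧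
  (∀ P Q c, R P Q → R (.res c P) (.res c Q))

/-- An infinite τ-sequence. -/
def TauSeq (f : ℕ → Term) : Prop := ∀ n, Tau (f n) (f (n + 1))

/-- `P —τ→⟹ P'`. -/
def TauWeak (P P' : Term) : Prop := ∃ P₀, Tau P P₀ ∧ WeakTau P₀ P'

def Codivergent (R : PRel) : Prop := ∀ P Q, R P Q →
  ((∀ f : ℕ → Term, f 0 = Q → TauSeq f →
      ∃ k, 1 ≤ k ∧ ∃ P', TauWeak P P' ∧ R P' (f k)) ∧
   (∀ f : ℕ → Term, f 0 = P → TauSeq f →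
      ∃ k, 1 ≤ k ∧ ∃ Q', TauWeak Q Q' ∧ R Q' (f k)))

/-- Branching-style bisimulation. -/
def Bisim (R : PRel) : Prop := ∀ P Q, R P Q →
  ((∀ Q', Tau Q Q' →
      (∃ P', WeakTau P P' ∧ R P' Q ∧ R P' Q') ∨
      (∃ P'' P', WeakTau P P'' ∧ R P'' Q ∧ Tau P'' P' ∧ R P' Q')) ∧
   (∀ P', Tau P P' →
      (∃ Q', WeakTau Q Q' ∧ R P Q' ∧ R P' Q') ∨
      (∃ Q'' Q', WeakTau Q Q'' ∧ R P Q'' ∧ Tau Q'' Q' ∧ R P' Q')))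

/-- A relation qualifying for the absolute equality. -/
def GoodAbs (R : PRel) : Prop :=
  OnProc R ∧ ReflProc R ∧ Equipollent R ∧ Extensional R ∧ Codivergent R ∧ Bisim R

/-- The absolute equality: the largest reflexive, equipollent, extensional,
codivergent bisimulation on π-processes. -/
def AbsEq (P Q : Term) : Prop := ∃ R : PRel, GoodAbs R ∧ R P Q

/-- `P ⇊` : strong observability. -/
def StrongObs (P : Term) : Prop := ∀ P', WeakTau P P' → Obs P'

def StrongEquipollent (R : PRel) : Prop := ∀ P Q, R P Q → (StrongObs P ↔ StrongObs Q)

def GoodBox (R : PRel) : Prop := OnProc R ∧ ReflProc R ∧ StrongEquipollent R ∧ Extensional R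

/-- The box equality =_□ : the largest reflexive, strongly equipollent,
extensional relation on π-processes. -/
def BoxEq (P Q : Term) : Prop := ∃ R : PRel, GoodBox R ∧ R P Q

def GoodDia (R : PRel) : Prop := OnProc R ∧ ReflProc R ∧ Equipollent R ∧ Extensional R

/-- The diamond equality =_◇ : the largest reflexive, equipollent, extensional
relation on π-processes. -/
def DiamondEq (P Q : Term) : Prop := ∃ R : PRel, GoodDia R ∧ R P Q


/-! ### Auxiliary development -/

section Aux

open Term

/-- Subject of a label. -/
def lsubj : Label → Name
  | .inp a _ => a
  | .out a _ => a
  | .bout a _ => a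

lemma wtau_trans {P Q R : Term} (h₁ : WeakTau P Q) (h₂ : WeakTau Q R) : WeakTau P R :=
  Relation.ReflTransGen.trans h₁ h₂

lemma wtau_parL {S S' : Term} (T : Term) (h : WeakTau S S') :
    WeakTau (.par S T) (.par S' T) :=
  Relation.ReflTransGen.lift (r := Tau) (p := Tau) (fun X => Term.par X T) (fun _ _ hs => Step.parL hs) _ _ h

lemma wtau_parR {T T' : Term} (S : Term) (h : WeakTau T T') :
    WeakTau (.par S T) (.par S T') :=
  Relation.ReflTransGen.lift (r := Tau) (p := Tau) (fun X => Term.par S X) (fun _ _ hs => Step.parR hs) _ _ h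

lemma wtau_res {T T' : Term} (c : Name) (h : WeakTau T T') :
    WeakTau (.res c T) (.res c T') :=
  Relation.ReflTransGen.lift (r := Tau) (p := Tau) (fun X => Term.res c X)
    (fun _ _ hs => Step.resStep hs (by simp [Act.names])) _ _ h

lemma obs_of_wtau {P P' : Term} (h : WeakTau P P') (h' : Obs P') : Obs P := by
  obtain ⟨X, ℓ, X', hw, hs⟩ := h'
  exact ⟨X, ℓ, X', wtau_trans h hw, hs⟩

lemma obs_of_step {P P' : Term} {ℓ : Label} (h : Step P (.lab ℓ) P') : Obs P :=
  ⟨P, ℓ, P', Relation.ReflTransGen.refl, h⟩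

lemma not_obs_of_tau {P P' : Term} (h : ¬ Obs P) (ht : Tau P P') : ¬ Obs P' :=
  fun h' => h (obs_of_wtau (Relation.ReflTransGen.single ht) h')

lemma not_obs_of_wtau {P P' : Term} (h : ¬ Obs P) (ht : WeakTau P P') : ¬ Obs P' :=
  fun h' => h (obs_of_wtau ht h')

lemma silent_no_label {P P' : Term} {ℓ : Label} (h : ¬ Obs P) (hs : Step P (.lab ℓ) P') :
    False := h (obs_of_step hs)

/-- All names occurring in a term (free, bound, restricted). -/
def anames : Term → Set Name
  | .nil => ∅
  | .inp n _ _ Ts => n.names ∪ ⋃ i, anames (Ts i)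
  | .out n _ ms Ts => n.names ∪ ⋃ i, ((ms i).names ∪ anames (Ts i))
  | .par S T => anames S ∪ anames T
  | .res c T => insert c (anames T)
  | .mat p q T => p.names ∪ q.names ∪ anames T
  | .mis p q T => p.names ∪ q.names ∪ anames T
  | .repInp n _ T => n.names ∪ anames T
  | .repOut n m T => n.names ∪ m.names ∪ anames T

lemma anames_applyVar {S : Set Name} :
    ∀ (T : Term) (σ : ℕ → NV), (∀ y, (σ y).names ⊆ S) →
      anames (T.applyVar σ) ⊆ anames T ∪ S := by
  intro T
  induction T with
  | nil => intro σ hσ; simp [Term.applyVar, anames]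
  | inp n x k Ts ih =>
      intro σ hσ
      have hσ' : ∀ y, ((Function.update σ x (NV.vr x)) y).names ⊆ S := by
        intro y
        by_cases h : y = x
        · subst h; simp [NV.names]
        · simp [Function.update_of_ne h]; exact hσ y
      simp only [Term.applyVar, anames]
      intro z hz
      rcases hz with hz | hz
      · cases n with
        | nm a => simp [NV.sub, NV.names] at hz ⊢; tauto
        | vr y => exact Or.inr (hσ y hz)
      · simp only [Set.mem_iUnion] at hz
        obtain ⟨i, hi⟩ := hz
        rcases ih i (Function.update σ x (NV.vr x)) hσ' hi with h | h
        · exact Or.inl (Or.inr (Set.mem_iUnion.2 ⟨i, h⟩))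
        · exact Or.inr h
  | out n k ms Ts ih =>
      intro σ hσ
      simp only [Term.applyVar, anames]
      intro z hz
      rcases hz with hz | hz
      · cases n with
        | nm a => simp [NV.sub, NV.names] at hz ⊢; tauto
        | vr y => exact Or.inr (hσ y hz)
      · simp only [Set.mem_iUnion] at hz
        obtain ⟨i, hi⟩ := hz
        rcases hi with hi | hi
        · cases hm : ms i with
          | nm a => rw [hm] at hi; simp [NV.sub, NV.names] at hi; subst hi
                    exact Or.inl (Or.inr (Set.mem_iUnion.2 ⟨i, Or.inl (by simp [hm, NV.names])⟩))
          | vr y => rw [hm] at hi; exact Or.inr (hσ y hi)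
        · rcases ih i σ hσ hi with h | h
          · exact Or.inl (Or.inr (Set.mem_iUnion.2 ⟨i, Or.inr h⟩))
          · exact Or.inr h
  | par A B ihA ihB =>
      intro σ hσ
      simp only [Term.applyVar, anames]
      intro z hz
      rcases hz with hz | hz
      · rcases ihA σ hσ hz with h | h
        · exact Or.inl (Or.inl h)
        · exact Or.inr h
      · rcases ihB σ hσ hz with h | h
        · exact Or.inl (Or.inr h)
        · exact Or.inr h
  | res c T ih =>
      intro σ hσ
      simp only [Term.applyVar, anames]
      intro z hz
      rcases hz with hz | hz
      · exact Or.inl (Or.inl hz)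
      · rcases ih σ hσ hz with h | h
        · exact Or.inl (Or.inr h)
        · exact Or.inr h
  | mat p q T ih =>
      intro σ hσ
      simp only [Term.applyVar, anames]
      intro z hz
      rcases hz with (hz | hz) | hz
      · cases p with
        | nm a => simp [NV.sub, NV.names] at hz ⊢; tauto
        | vr y => exact Or.inr (hσ y hz)
      · cases q with
        | nm a => simp [NV.sub, NV.names] at hz ⊢; tauto
        | vr y => exact Or.inr (hσ y hz)
      · rcases ih σ hσ hz with h | h
        · exact Or.inl (Or.inr h)
        · exact Or.inr h
  | mis p q T ih =>
      intro σ hσ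
      simp only [Term.applyVar, anames]
      intro z hz
      rcases hz with (hz | hz) | hz
      · cases p with
        | nm a => simp [NV.sub, NV.names] at hz ⊢; tauto
        | vr y => exact Or.inr (hσ y hz)
      · cases q with
        | nm a => simp [NV.sub, NV.names] at hz ⊢; tauto
        | vr y => exact Or.inr (hσ y hz)
      · rcases ih σ hσ hz with h | h
        · exact Or.inl (Or.inr h)
        · exact Or.inr h
  | repInp n x T ih =>
      intro σ hσ
      have hσ' : ∀ y, ((Function.update σ x (NV.vr x)) y).names ⊆ S := by
        intro y
        by_cases h : y = x
        · subst h; simp [NV.names]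
        · simp [Function.update_of_ne h]; exact hσ y
      simp only [Term.applyVar, anames]
      intro z hz
      rcases hz with hz | hz
      · cases n with
        | nm a => simp [NV.sub, NV.names] at hz ⊢; tauto
        | vr y => exact Or.inr (hσ y hz)
      · rcases ih (Function.update σ x (NV.vr x)) hσ' hz with h | h
        · exact Or.inl (Or.inr h)
        · exact Or.inr h
  | repOut n m T ih =>
      intro σ hσ
      simp only [Term.applyVar, anames]
      intro z hz
      rcases hz with (hz | hz) | hz
      · cases n with
        | nm a => simp [NV.sub, NV.names] at hz ⊢; tauto
        | vr y => exact Or.inr (hσ y hz)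
      · cases m with
        | nm a => simp [NV.sub, NV.names] at hz ⊢; tauto
        | vr y => exact Or.inr (hσ y hz)
      · rcases ih σ hσ hz with h | h
        · exact Or.inl (Or.inr h)
        · exact Or.inr h

lemma anames_subst1 {x : ℕ} {c : Name} (T : Term) :
    anames (T.subst1 x c) ⊆ insert c (anames T) := by
  have := anames_applyVar (S := {c}) T (fun y => if y = x then NV.nm c else NV.vr y)
    (by intro y; by_cases h : y = x <;> simp [h, NV.names])
  intro z hz
  rcases this hz with h | h
  · exact Set.mem_insert_of_mem _ h
  · simp at h; simp [h]

end Aux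

section Aux2
open Term

lemma step_anames {T : Term} {μ : Act} {T' : Term} (h : Step T μ T') :
    anames T' ⊆ anames T ∪ μ.names ∧
    (∀ a b, μ = .lab (.inp a b) → a ∈ anames T) ∧
    (∀ a b, μ = .lab (.out a b) → a ∈ anames T ∧ b ∈ anames T) ∧
    (∀ a b, μ = .lab (.bout a b) → a ∈ anames T ∧ b ∈ anames T) := by
  induction h with
  | @inp a x k Ts i c =>
      refine ⟨?_, ?_, ?_, ?_⟩
      · intro z hz
        rcases anames_subst1 (Ts i) hz with h | h
        · subst h; right; simp [Act.names, Label.names]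
        · left; simp [anames]; right; exact ⟨i, h⟩
      · intro a' b' he; cases he; simp [anames, NV.names]
      · intro a' b' he; cases he
      · intro a' b' he; cases he
  | @out a k ms Ts i c hms =>
      refine ⟨?_, ?_, ?_, ?_⟩
      · intro z hz; left; simp [anames]; right; exact ⟨i, Or.inr hz⟩
      · intro a' b' he; cases he
      · intro a' b' he; cases he
        constructor
        · simp [anames, NV.names]
        · simp only [anames, NV.names]; right
          exact Set.mem_iUnion.2 ⟨i, Or.inl (by simp [hms, NV.names])⟩
      · intro a' b' he; cases he
  | @parR S T T' μ hst ih =>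
      refine ⟨?_, ?_, ?_, ?_⟩
      · intro z hz
        rcases hz with hz | hz
        · exact Or.inl (Or.inl hz)
        · rcases ih.1 hz with h | h
          · exact Or.inl (Or.inr h)
          · exact Or.inr h
      · intro a b he; exact Or.inr (ih.2.1 a b he)
      · intro a b he; exact ⟨Or.inr (ih.2.2.1 a b he).1, Or.inr (ih.2.2.1 a b he).2⟩
      · intro a b he; exact ⟨Or.inr (ih.2.2.2 a b he).1, Or.inr (ih.2.2.2 a b he).2⟩
  | @parL S S' T μ hst ih =>
      refine ⟨?_, ?_, ?_, ?_⟩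
      · intro z hz
        rcases hz with hz | hz
        · rcases ih.1 hz with h | h
          · exact Or.inl (Or.inl h)
          · exact Or.inr h
        · exact Or.inl (Or.inr hz)
      · intro a b he; exact Or.inl (ih.2.1 a b he)
      · intro a b he; exact ⟨Or.inl (ih.2.2.1 a b he).1, Or.inl (ih.2.2.1 a b he).2⟩
      · intro a b he; exact ⟨Or.inl (ih.2.2.2 a b he).1, Or.inl (ih.2.2.2 a b he).2⟩
  | @commL S S' T T' a b hS hT ihS ihT =>
      have hab := ihT.2.2.1 a b rfl
      refine ⟨?_, fun _ _ he => by simp at he, fun _ _ he => by simp at he,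
        fun _ _ he => by simp at he⟩
      intro z hz
      rcases hz with hz | hz
      · rcases ihS.1 hz with h | h
        · exact Or.inl (Or.inl h)
        · simp [Act.names, Label.names] at h
          rcases h with h | h
          · subst h; exact Or.inl (Or.inr hab.1)
          · subst h; exact Or.inl (Or.inr hab.2)
      · rcases ihT.1 hz with h | h
        · exact Or.inl (Or.inr h)
        · simp [Act.names, Label.names] at h
          rcases h with h | h
          · subst h; exact Or.inl (Or.inr hab.1)
          · subst h; exact Or.inl (Or.inr hab.2)
  | @commR S S' T T' a b hS hT ihS ihT =>
      have hab := ihS.2.2.1 a b rfl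
      refine ⟨?_, fun _ _ he => by simp at he, fun _ _ he => by simp at he,
        fun _ _ he => by simp at he⟩
      intro z hz
      rcases hz with hz | hz
      · rcases ihS.1 hz with h | h
        · exact Or.inl (Or.inl h)
        · simp [Act.names, Label.names] at h
          rcases h with h | h
          · subst h; exact Or.inl (Or.inl hab.1)
          · subst h; exact Or.inl (Or.inl hab.2)
      · rcases ihT.1 hz with h | h
        · exact Or.inl (Or.inr h)
        · simp [Act.names, Label.names] at h
          rcases h with h | h
          · subst h; exact Or.inl (Or.inl hab.1)
          · subst h; exact Or.inl (Or.inl hab.2)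
  | @closeL S S' T T' a c hS hT ihS ihT =>
      have hac := ihT.2.2.2 a c rfl
      refine ⟨?_, fun _ _ he => by simp at he, fun _ _ he => by simp at he,
        fun _ _ he => by simp at he⟩
      intro z hz
      simp only [anames, Set.mem_insert_iff] at hz
      rcases hz with hz | hz | hz
      · subst hz; exact Or.inl (Or.inr hac.2)
      · rcases ihS.1 hz with h | h
        · exact Or.inl (Or.inl h)
        · simp [Act.names, Label.names] at h
          rcases h with h | h
          · subst h; exact Or.inl (Or.inr hac.1)
          · subst h; exact Or.inl (Or.inr hac.2)
      · rcases ihT.1 hz with h | h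
        · exact Or.inl (Or.inr h)
        · simp [Act.names, Label.names] at h
          rcases h with h | h
          · subst h; exact Or.inl (Or.inr hac.1)
          · subst h; exact Or.inl (Or.inr hac.2)
  | @closeR S S' T T' a c hS hT ihS ihT =>
      have hac := ihS.2.2.2 a c rfl
      refine ⟨?_, fun _ _ he => by simp at he, fun _ _ he => by simp at he,
        fun _ _ he => by simp at he⟩
      intro z hz
      simp only [anames, Set.mem_insert_iff] at hz
      rcases hz with hz | hz | hz
      · subst hz; exact Or.inl (Or.inl hac.2)
      · rcases ihS.1 hz with h | h
        · exact Or.inl (Or.inl h)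
        · simp [Act.names, Label.names] at h
          rcases h with h | h
          · subst h; exact Or.inl (Or.inl hac.1)
          · subst h; exact Or.inl (Or.inl hac.2)
      · rcases ihT.1 hz with h | h
        · exact Or.inl (Or.inr h)
        · simp [Act.names, Label.names] at h
          rcases h with h | h
          · subst h; exact Or.inl (Or.inl hac.1)
          · subst h; exact Or.inl (Or.inl hac.2)
  | @open_ T T' a c hT ih =>
      have hac := ih.2.2.1 a c rfl
      refine ⟨?_, fun _ _ he => by simp at he, fun _ _ he => by simp at he, ?_⟩
      · intro z hz
        rcases ih.1 hz with h | h
        · exact Or.inl (Set.mem_insert_of_mem _ h)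
        · exact Or.inr h
      · intro a' b' he; cases he
        exact ⟨Set.mem_insert_of_mem _ hac.1, Set.mem_insert _ _⟩
  | @resStep T T' μ c hT hc ih =>
      refine ⟨?_, ?_, ?_, ?_⟩
      · intro z hz
        simp only [anames, Set.mem_insert_iff] at hz
        rcases hz with hz | hz
        · exact Or.inl (by simp [anames, hz])
        · rcases ih.1 hz with h | h
          · exact Or.inl (Set.mem_insert_of_mem _ h)
          · exact Or.inr h
      · intro a b he; exact Set.mem_insert_of_mem _ (ih.2.1 a b he)
      · intro a b he
        exact ⟨Set.mem_insert_of_mem _ (ih.2.2.1 a b he).1,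
          Set.mem_insert_of_mem _ (ih.2.2.1 a b he).2⟩
      · intro a b he
        exact ⟨Set.mem_insert_of_mem _ (ih.2.2.2 a b he).1,
          Set.mem_insert_of_mem _ (ih.2.2.2 a b he).2⟩
  | @matStep T T' μ a hT ih =>
      refine ⟨?_, ?_, ?_, ?_⟩
      · intro z hz
        rcases ih.1 hz with h | h
        · exact Or.inl (Or.inr h)
        · exact Or.inr h
      · intro a' b he; exact Or.inr (ih.2.1 a' b he)
      · intro a' b he; exact ⟨Or.inr (ih.2.2.1 a' b he).1, Or.inr (ih.2.2.1 a' b he).2⟩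
      · intro a' b he; exact ⟨Or.inr (ih.2.2.2 a' b he).1, Or.inr (ih.2.2.2 a' b he).2⟩
  | @misStep T T' μ a b hab hT ih =>
      refine ⟨?_, ?_, ?_, ?_⟩
      · intro z hz
        rcases ih.1 hz with h | h
        · exact Or.inl (Or.inr h)
        · exact Or.inr h
      · intro a' b' he; exact Or.inr (ih.2.1 a' b' he)
      · intro a' b' he; exact ⟨Or.inr (ih.2.2.1 a' b' he).1, Or.inr (ih.2.2.1 a' b' he).2⟩
      · intro a' b' he; exact ⟨Or.inr (ih.2.2.2 a' b' he).1, Or.inr (ih.2.2.2 a' b' he).2⟩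
  | @repOutStep a b T =>
      refine ⟨?_, fun _ _ he => by simp at he, ?_, fun _ _ he => by simp at he⟩
      · intro z hz
        rcases hz with hz | hz
        · exact Or.inl (Or.inr hz)
        · exact Or.inl hz
      · intro a' b' he; cases he
        exact ⟨Or.inl (Or.inl (by simp [NV.names])), Or.inl (Or.inr (by simp [NV.names]))⟩
  | @repInpStep a x T b =>
      refine ⟨?_, ?_, fun _ _ he => by simp at he, fun _ _ he => by simp at he⟩
      · intro z hz
        rcases hz with hz | hz
        · rcases anames_subst1 T hz with h | h
          · subst h; right; simp [Act.names, Label.names]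
          · exact Or.inl (Or.inr h)
        · exact Or.inl hz
      · intro a' b' he; cases he; simp [anames, NV.names]

lemma step_anames_sub {T : Term} {μ : Act} {T' : Term} (h : Step T μ T') :
    anames T' ⊆ anames T ∪ μ.names := (step_anames h).1

lemma tau_anames {T T' : Term} (h : Tau T T') : anames T' ⊆ anames T := by
  intro z hz
  rcases (step_anames h).1 hz with h' | h'
  · exact h'
  · simp [Act.names] at h'

lemma step_subj_mem {T T' : Term} {ℓ : Label} (h : Step T (.lab ℓ) T') :
    lsubj ℓ ∈ anames T := by
  cases ℓ with
  | inp a b => exact (step_anames h).2.1 a b rfl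
  | out a b => exact ((step_anames h).2.2.1 a b rfl).1
  | bout a b => exact ((step_anames h).2.2.2 a b rfl).1

end Aux2

section Aux3
open Term

/-- Restrict each name in the list twice. -/
def hideL : List Name → Term → Term
  | [], M => M
  | c :: l, M => .res c (.res c (hideL l M))

lemma lsubj_mem_names (ℓ : Label) : lsubj ℓ ∈ (Act.lab ℓ).names := by
  cases ℓ <;> simp [lsubj, Act.names, Label.names]

lemma hide_step_intro : ∀ (l : List Name) {M μ Y}, Step M μ Y →
    (∀ c ∈ l, c ∉ μ.names) → Step (hideL l M) μ (hideL l Y) := by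
  intro l
  induction l with
  | nil => intro M μ Y h _; exact h
  | cons c l ih =>
      intro M μ Y h hd
      have hc : c ∉ μ.names := hd c (by simp)
      have h' := ih h (fun c' hc' => hd c' (by simp [hc']))
      exact Step.resStep (Step.resStep h' hc) hc

lemma hide_step_inv : ∀ (l : List Name) {M μ Y}, Step (hideL l M) μ Y →
    ∃ Y₀, Step M μ Y₀ ∧ Y = hideL l Y₀ ∧ ∀ c ∈ l, c ∉ μ.names := by
  intro l
  induction l with
  | nil => intro M μ Y h; exact ⟨Y, h, rfl, by simp⟩
  | cons c l ih =>
      intro M μ Y h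
      cases h with
      | open_ h' =>
          cases h' with
          | resStep h'' hc => exact absurd (by simp [Act.names, Label.names]) hc
      | resStep h' hc =>
          cases h' with
          | open_ h'' => exact absurd (by simp [Act.names, Label.names]) hc
          | resStep h'' hc' =>
              obtain ⟨Y₀, hst, rfl, hd⟩ := ih h''
              refine ⟨Y₀, hst, rfl, ?_⟩
              intro c' hc'
              rcases List.mem_cons.1 hc' with rfl | hm
              · exact hc
              · exact hd c' hm

lemma wtau_hide {M M' : Term} (l : List Name) (h : WeakTau M M') :
    WeakTau (hideL l M) (hideL l M') :=
  Relation.ReflTransGen.lift (r := Tau) (p := Tau) (hideL l)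
    (fun _ _ hs => hide_step_intro l hs (fun c _ => by simp [Act.names])) _ _ h

lemma hide_wtau_inv {l : List Name} {M X : Term} (h : WeakTau (hideL l M) X) :
    ∃ M', X = hideL l M' ∧ WeakTau M M' ∧ anames M' ⊆ anames M := by
  induction h with
  | refl => exact ⟨M, rfl, Relation.ReflTransGen.refl, fun _ h => h⟩
  | tail _ hstep ih =>
      obtain ⟨M', rfl, hw, hsub⟩ := ih
      obtain ⟨Y₀, hst, rfl, _⟩ := hide_step_inv l hstep
      exact ⟨Y₀, rfl, Relation.ReflTransGen.tail hw hst,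
        fun z hz => hsub (tau_anames hst hz)⟩

lemma hide_dead {l : List Name} {M : Term} (hM : anames M ⊆ {x | x ∈ l}) :
    ¬ Obs (hideL l M) := by
  rintro ⟨X, ℓ, X', hw, hs⟩
  obtain ⟨M', rfl, _, hsub⟩ := hide_wtau_inv hw
  obtain ⟨Y₀, hst, _, hd⟩ := hide_step_inv l hs
  have h1 : lsubj ℓ ∈ {x | x ∈ l} := hM (hsub (step_subj_mem hst))
  exact hd (lsubj ℓ) h1 (lsubj_mem_names ℓ)

lemma fvar_applyVar : ∀ (T : Term) (σ : ℕ → NV),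
    Term.fvar (T.applyVar σ) ⊆ ⋃ z ∈ T.fvar, (σ z).vars := by
  intro T
  induction T with
  | nil => intro σ; simp [Term.applyVar, Term.fvar]
  | inp n x k Ts ih =>
      intro σ
      simp only [Term.applyVar, Term.fvar]
      intro y hy
      simp only [Set.mem_iUnion, Set.mem_union, Set.mem_diff, Set.mem_singleton_iff,
        Set.mem_setOf_eq] at hy ⊢
      rcases hy with hy | ⟨⟨i, hy⟩, hyx⟩
      · cases n with
        | nm a => simp [NV.sub, NV.vars] at hy
        | vr z => exact ⟨z, Or.inl (by simp [NV.vars]), hy⟩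
      · have h2 := ih i (Function.update σ x (NV.vr x)) hy
        simp only [Set.mem_iUnion] at h2
        obtain ⟨z, hz1, hz2⟩ := h2
        by_cases hzx : z = x
        · subst hzx; simp [NV.vars] at hz2; exact absurd hz2 hyx
        · rw [Function.update_of_ne hzx] at hz2
          exact ⟨z, Or.inr ⟨⟨i, hz1⟩, hzx⟩, hz2⟩
  | out n k ms Ts ih =>
      intro σ
      simp only [Term.applyVar, Term.fvar]
      intro y hy
      simp only [Set.mem_iUnion, Set.mem_union] at hy ⊢
      rcases hy with hy | ⟨i, hy | hy⟩
      · cases n with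
        | nm a => simp [NV.sub, NV.vars] at hy
        | vr z => exact ⟨z, Or.inl (by simp [NV.vars]), hy⟩
      · cases hm : ms i with
        | nm a => rw [hm] at hy; simp [NV.sub, NV.vars] at hy
        | vr z =>
            rw [hm] at hy
            exact ⟨z, Or.inr ⟨i, Or.inl (by simp [hm, NV.vars])⟩, hy⟩
      · have h2 := ih i σ hy
        simp only [Set.mem_iUnion] at h2
        obtain ⟨z, hz1, hz2⟩ := h2
        exact ⟨z, Or.inr ⟨i, Or.inr hz1⟩, hz2⟩
  | par A B ihA ihB =>
      intro σ
      simp only [Term.applyVar, Term.fvar]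
      intro y hy
      simp only [Set.mem_iUnion, Set.mem_union] at hy ⊢
      rcases hy with hy | hy
      · obtain ⟨z, hz1, hz2⟩ := Set.mem_iUnion₂.1 (ihA σ hy)
        exact ⟨z, Or.inl hz1, hz2⟩
      · obtain ⟨z, hz1, hz2⟩ := Set.mem_iUnion₂.1 (ihB σ hy)
        exact ⟨z, Or.inr hz1, hz2⟩
  | res c T ih =>
      intro σ
      simp only [Term.applyVar, Term.fvar]
      exact ih σ
  | mat p q T ih =>
      intro σ
      simp only [Term.applyVar, Term.fvar]
      intro y hy
      simp only [Set.mem_iUnion, Set.mem_union] at hy ⊢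
      rcases hy with (hy | hy) | hy
      · cases p with
        | nm a => simp [NV.sub, NV.vars] at hy
        | vr z => exact ⟨z, Or.inl (Or.inl (by simp [NV.vars])), hy⟩
      · cases q with
        | nm a => simp [NV.sub, NV.vars] at hy
        | vr z => exact ⟨z, Or.inl (Or.inr (by simp [NV.vars])), hy⟩
      · obtain ⟨z, hz1, hz2⟩ := Set.mem_iUnion₂.1 (ih σ hy)
        exact ⟨z, Or.inr hz1, hz2⟩
  | mis p q T ih =>
      intro σ
      simp only [Term.applyVar, Term.fvar]
      intro y hy
      simp only [Set.mem_iUnion, Set.mem_union] at hy ⊢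
      rcases hy with (hy | hy) | hy
      · cases p with
        | nm a => simp [NV.sub, NV.vars] at hy
        | vr z => exact ⟨z, Or.inl (Or.inl (by simp [NV.vars])), hy⟩
      · cases q with
        | nm a => simp [NV.sub, NV.vars] at hy
        | vr z => exact ⟨z, Or.inl (Or.inr (by simp [NV.vars])), hy⟩
      · obtain ⟨z, hz1, hz2⟩ := Set.mem_iUnion₂.1 (ih σ hy)
        exact ⟨z, Or.inr hz1, hz2⟩
  | repInp n x T ih =>
      intro σ
      simp only [Term.applyVar, Term.fvar]
      intro y hy
      simp only [Set.mem_iUnion, Set.mem_union, Set.mem_diff, Set.mem_singleton_iff] at hy ⊢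
      rcases hy with hy | ⟨hy, hyx⟩
      · cases n with
        | nm a => simp [NV.sub, NV.vars] at hy
        | vr z => exact ⟨z, Or.inl (by simp [NV.vars]), hy⟩
      · have h2 := ih (Function.update σ x (NV.vr x)) hy
        simp only [Set.mem_iUnion] at h2
        obtain ⟨z, hz1, hz2⟩ := h2
        by_cases hzx : z = x
        · subst hzx; simp [NV.vars] at hz2; exact absurd hz2 hyx
        · rw [Function.update_of_ne hzx] at hz2
          exact ⟨z, Or.inr ⟨hz1, hzx⟩, hz2⟩
  | repOut n m T ih =>
      intro σ
      simp only [Term.applyVar, Term.fvar]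
      intro y hy
      simp only [Set.mem_iUnion, Set.mem_union] at hy ⊢
      rcases hy with (hy | hy) | hy
      · cases n with
        | nm a => simp [NV.sub, NV.vars] at hy
        | vr z => exact ⟨z, Or.inl (Or.inl (by simp [NV.vars])), hy⟩
      · cases m with
        | nm a => simp [NV.sub, NV.vars] at hy
        | vr z => exact ⟨z, Or.inl (Or.inr (by simp [NV.vars])), hy⟩
      · obtain ⟨z, hz1, hz2⟩ := Set.mem_iUnion₂.1 (ih σ hy)
        exact ⟨z, Or.inr hz1, hz2⟩

lemma fvar_subst1 {x : ℕ} {c : Name} (T : Term) :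
    Term.fvar (T.subst1 x c) ⊆ T.fvar \ {x} := by
  intro y hy
  obtain ⟨z, hz1, hz2⟩ := Set.mem_iUnion₂.1 (fvar_applyVar T _ hy)
  by_cases hzx : z = x
  · subst hzx; simp [NV.vars] at hz2
  · simp only [if_neg hzx, NV.vars, Set.mem_singleton_iff] at hz2
    subst hz2
    exact ⟨hz1, hzx⟩

lemma step_fvar {T : Term} {μ : Act} {T' : Term} (h : Step T μ T') :
    T'.fvar ⊆ T.fvar := by
  induction h with
  | @inp a x k Ts i c =>
      intro y hy
      obtain ⟨h1, h2⟩ := fvar_subst1 (Ts _) hy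
      simp only [Term.fvar]
      exact Or.inr ⟨Set.mem_iUnion.2 ⟨i, h1⟩, h2⟩
  | @out a k ms Ts i c hms =>
      intro y hy
      simp only [Term.fvar]
      exact Or.inr (Set.mem_iUnion.2 ⟨i, Or.inr hy⟩)
  | parR _ ih => exact Set.union_subset_union_right _ ih
  | parL _ ih => exact Set.union_subset_union_left _ ih
  | commL _ _ ihS ihT => exact Set.union_subset_union ihS ihT
  | commR _ _ ihS ihT => exact Set.union_subset_union ihS ihT
  | closeL _ _ ihS ihT => exact Set.union_subset_union ihS ihT
  | closeR _ _ ihS ihT => exact Set.union_subset_union ihS ihT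
  | open_ _ ih => exact ih
  | resStep _ _ ih => exact ih
  | matStep _ ih => intro y hy; exact Or.inr (ih hy)
  | misStep _ _ ih => intro y hy; exact Or.inr (ih hy)
  | @repOutStep a b T =>
      intro y hy
      rcases hy with hy | hy
      · exact Or.inr hy
      · exact hy
  | @repInpStep a x T b =>
      intro y hy
      rcases hy with hy | hy
      · obtain ⟨h1, h2⟩ := fvar_subst1 T hy
        exact Or.inr ⟨h1, h2⟩
      · exact hy

lemma closed_step {T T' : Term} {μ : Act} (hc : Closed T) (h : Step T μ T') : Closed T' :=
  Set.eq_empty_of_subset_empty (hc ▸ step_fvar h)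

lemma isProc_step {T T' : Term} {μ : Act} (hc : IsProc T) (h : Step T μ T') : IsProc T' :=
  closed_step hc h

lemma nv_names_finite (n : NV) : n.names.Finite := by
  cases n <;> simp [NV.names]

lemma anames_finite : ∀ (T : Term), (anames T).Finite := by
  intro T
  induction T with
  | nil => exact Set.finite_empty
  | inp n x k Ts ih =>
      exact (nv_names_finite n).union (Set.finite_iUnion ih)
  | out n k ms Ts ih =>
      exact (nv_names_finite n).union
        (Set.finite_iUnion (fun i => (nv_names_finite (ms i)).union (ih i)))
  | par A B ihA ihB => exact ihA.union ihB
  | res c T ih => exact ih.insert c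
  | mat p q T ih => exact ((nv_names_finite p).union (nv_names_finite q)).union ih
  | mis p q T ih => exact ((nv_names_finite p).union (nv_names_finite q)).union ih
  | repInp n x T ih => exact (nv_names_finite n).union ih
  | repOut n m T ih => exact ((nv_names_finite n).union (nv_names_finite m)).union ih

end Aux3

section Part1

lemma wtau_anames {T T' : Term} (h : WeakTau T T') : anames T' ⊆ anames T := by
  induction h with
  | refl => exact fun _ h => h
  | tail _ hstep ih => exact fun z hz => ih (tau_anames hstep hz)

lemma bisim_trackR {R : PRel} (hB : Bisim R) {P Q Q' : Term} (hR : R P Q)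
    (hw : WeakTau Q Q') : ∃ P', WeakTau P P' ∧ R P' Q' := by
  induction hw with
  | refl => exact ⟨P, Relation.ReflTransGen.refl, hR⟩
  | tail _ hstep ih =>
      obtain ⟨P', hP', hR'⟩ := ih
      rcases (hB _ _ hR').1 _ hstep with ⟨P'', h1, _, h3⟩ | ⟨P₁, P₂, h1, _, h2, h3⟩
      · exact ⟨P'', wtau_trans hP' h1, h3⟩
      · exact ⟨P₂, wtau_trans hP' (Relation.ReflTransGen.tail h1 h2), h3⟩

lemma bisim_trackL {R : PRel} (hB : Bisim R) {P Q P' : Term} (hR : R P Q)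
    (hw : WeakTau P P') : ∃ Q', WeakTau Q Q' ∧ R P' Q' := by
  induction hw with
  | refl => exact ⟨Q, Relation.ReflTransGen.refl, hR⟩
  | tail _ hstep ih =>
      obtain ⟨Q', hQ', hR'⟩ := ih
      rcases (hB _ _ hR').2 _ hstep with ⟨Q'', h1, _, h3⟩ | ⟨Q₁, Q₂, h1, _, h2, h3⟩
      · exact ⟨Q'', wtau_trans hQ' h1, h3⟩
      · exact ⟨Q₂, wtau_trans hQ' (Relation.ReflTransGen.tail h1 h2), h3⟩

lemma absEq_boxEq {P Q : Term} (h : AbsEq P Q) : BoxEq P Q := by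
  obtain ⟨R, ⟨hOn, hRefl, hEq, hExt, _, hBis⟩, hR⟩ := h
  refine ⟨R, ⟨hOn, hRefl, ?_, hExt⟩, hR⟩
  intro A B hAB
  constructor
  · intro hSA B' hwB
    obtain ⟨A', hwA, hR'⟩ := bisim_trackR hBis hAB hwB
    exact (hEq _ _ hR').1 (hSA A' hwA)
  · intro hSB A' hwA
    obtain ⟨B', hwB, hR'⟩ := bisim_trackL hBis hAB hwA
    exact (hEq _ _ hR').2 (hSB B' hwB)

end Part1

section Part2
open Term

/-- g-flag: `g(x).0`. -/
def flgT (g : Name) : Term := .inp (.nm g) 0 1 (fun _ => .nil)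

/-- `ḡg.0`. -/
def gtermT (g : Name) : Term := .out (.nm g) 1 (fun _ => .nm g) (fun _ => .nil)

/-- The tester for a label. -/
def trgFor (ℓ : Label) (g : Name) : Term :=
  match ℓ with
  | .inp a b => .out (.nm a) 1 (fun _ => .nm b) (fun _ => gtermT g)
  | .out a _ => .inp (.nm a) 0 1 (fun _ => gtermT g)
  | .bout a _ => .inp (.nm a) 0 1 (fun _ => gtermT g)

lemma trg_no_tau {ℓ : Label} {g : Name} {Y : Term} (h : Tau (trgFor ℓ g) Y) : False := by
  cases ℓ <;> simp only [trgFor] at h <;> cases h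

lemma trg_no_bout {ℓ : Label} {g : Name} {a m : Name} {Y : Term}
    (h : Step (trgFor ℓ g) (.lab (.bout a m)) Y) : False := by
  cases ℓ <;> simp only [trgFor] at h <;> cases h

lemma trg_no_gout {ℓ : Label} {g : Name} (hg : lsubj ℓ ≠ g) {m : Name} {Y : Term}
    (h : Step (trgFor ℓ g) (.lab (.out g m)) Y) : False := by
  cases ℓ with
  | inp a b => simp only [trgFor] at h; cases h; exact hg rfl
  | out a b => simp only [trgFor] at h; cases h
  | bout a b => simp only [trgFor] at h; cases h

lemma flg_no_tau {g : Name} {Y : Term} (h : Tau (flgT g) Y) : False := by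
  cases h

lemma flg_no_out {g : Name} {h m : Name} {Y : Term}
    (h' : Step (flgT g) (.lab (.out h m)) Y) : False := by
  cases h'

lemma flg_no_bout {g : Name} {h m : Name} {Y : Term}
    (h' : Step (flgT g) (.lab (.bout h m)) Y) : False := by
  cases h'

lemma flg_inp {g : Name} : Step (flgT g) (.lab (.inp g g)) Term.nil :=
  Step.inp (Ts := fun _ => Term.nil) 0 g

lemma claimA {l : List Name} {g : Name} (hgl : g ∉ l) {ℓ : Label} (hg : lsubj ℓ ≠ g)
    {X : Term} (hX : ¬ Obs X) :
    StrongObs (hideL l (.par (.par X (trgFor ℓ g)) (flgT g))) := by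
  have key : ∀ X', WeakTau (hideL l (.par (.par X (trgFor ℓ g)) (flgT g))) X' →
      ∃ X₀, X' = hideL l (.par (.par X₀ (trgFor ℓ g)) (flgT g)) ∧ ¬ Obs X₀ := by
    intro X' hw
    induction hw with
    | refl => exact ⟨X, rfl, hX⟩
    | tail _ hstep ih =>
        obtain ⟨X₀, rfl, hX₀⟩ := ih
        obtain ⟨Y₀, hst, rfl, _⟩ := hide_step_inv l hstep
        cases hst with
        | parR h => exact absurd h flg_no_tau
        | parL h =>
            cases h with
            | parR h' => exact absurd h' trg_no_tau
            | parL h' => exact ⟨_, rfl, not_obs_of_tau hX₀ h'⟩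
            | commL h1 h2 => exact absurd (obs_of_step h1) hX₀
            | commR h1 h2 => exact absurd (obs_of_step h1) hX₀
            | closeL h1 h2 => exact absurd (obs_of_step h1) hX₀
            | closeR h1 h2 => exact absurd (obs_of_step h1) hX₀
        | commL h1 h2 => exact absurd h2 flg_no_out
        | commR h1 h2 =>
            cases h2
            cases h1 with
            | parL h' => exact absurd (obs_of_step h') hX₀
            | parR h' => exact absurd h' (trg_no_gout hg)
        | closeL h1 h2 => exact absurd h2 flg_no_bout
        | closeR h1 h2 =>
            cases h1 with
            | parL h' => exact absurd (obs_of_step h') hX₀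
            | parR h' => exact absurd h' trg_no_bout
  intro X' hw
  obtain ⟨X₀, rfl, _⟩ := key X' hw
  refine obs_of_step (hide_step_intro l (Step.parR flg_inp) ?_)
  intro c hc
  simp only [Act.names, Label.names]
  intro hmem
  rcases hmem with rfl | rfl <;> exact hgl hc

end Part2

section Part2b
open Term

lemma gterm_subst {g : Name} {x : ℕ} {c : Name} : (gtermT g).subst1 x c = gtermT g := by
  simp [gtermT, Term.subst1, Term.applyVar, NV.sub]

lemma gterm_out {g : Name} : Step (gtermT g) (.lab (.out g g)) Term.nil :=
  Step.out (ms := fun _ => .nm g) (Ts := fun _ => Term.nil) 0 rfl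

lemma tau_names_empty (c : Name) : c ∉ (Act.tau).names := by simp [Act.names]

lemma claimB {l : List Name} {g : Name} {X X₁ X₂ : Term} {ℓ : Label}
    (hw : WeakTau X X₁) (hs : Step X₁ (.lab ℓ) X₂)
    (hsub : anames X ⊆ {x | x ∈ l}) (hlab : (Act.lab ℓ).names ⊆ {x | x ∈ l})
    (hgl : g ∉ l) :
    ¬ StrongObs (hideL l (.par (.par X (trgFor ℓ g)) (flgT g))) := by
  intro hSO
  have hX₁ : anames X₁ ⊆ {x | x ∈ l} := fun z hz => hsub (wtau_anames hw hz)
  have hX₂ : anames X₂ ⊆ {x | x ∈ l} := by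
    intro z hz
    rcases step_anames_sub hs hz with h | h
    · exact hX₁ h
    · exact hlab h
  have W1 : WeakTau (hideL l (.par (.par X (trgFor ℓ g)) (flgT g)))
      (hideL l (.par (.par X₁ (trgFor ℓ g)) (flgT g))) :=
    wtau_hide l (wtau_parL (flgT g) (wtau_parL (trgFor ℓ g) hw))
  cases ℓ with
  | inp a b =>
      have st : Step (trgFor (.inp a b) g) (.lab (.out a b)) (gtermT g) :=
        Step.out (ms := fun _ => .nm b) (Ts := fun _ => gtermT g) 0 rfl
      have t1 : Tau (.par (.par X₁ (trgFor (.inp a b) g)) (flgT g))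
          (.par (.par X₂ (gtermT g)) (flgT g)) :=
        Step.parL (Step.commL hs st)
      have t2 : Tau (.par (.par X₂ (gtermT g)) (flgT g))
          (.par (.par X₂ Term.nil) Term.nil) :=
        Step.commR (Step.parR gterm_out) flg_inp
      have WF : WeakTau (hideL l (.par (.par X (trgFor (.inp a b) g)) (flgT g)))
          (hideL l (.par (.par X₂ Term.nil) Term.nil)) := by
        refine wtau_trans W1 ?_
        refine Relation.ReflTransGen.tail (Relation.ReflTransGen.single
          (hide_step_intro l t1 (fun c _ => tau_names_empty c)))
          (hide_step_intro l t2 (fun c _ => tau_names_empty c))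
      have hdead : ¬ Obs (hideL l (.par (.par X₂ Term.nil) Term.nil)) := by
        apply hide_dead
        intro z hz
        rcases hz with (hz | hz) | hz
        · exact hX₂ hz
        · exact absurd hz (by simp [anames])
        · exact absurd hz (by simp [anames])
      exact hdead (hSO _ WF)
  | out a b =>
      have st : Step (trgFor (.out a b) g) (.lab (.inp a b)) ((gtermT g).subst1 0 b) :=
        Step.inp (Ts := fun _ => gtermT g) 0 b
      rw [gterm_subst] at st
      have t1 : Tau (.par (.par X₁ (trgFor (.out a b) g)) (flgT g))
          (.par (.par X₂ (gtermT g)) (flgT g)) :=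
        Step.parL (Step.commR hs st)
      have t2 : Tau (.par (.par X₂ (gtermT g)) (flgT g))
          (.par (.par X₂ Term.nil) Term.nil) :=
        Step.commR (Step.parR gterm_out) flg_inp
      have WF : WeakTau (hideL l (.par (.par X (trgFor (.out a b) g)) (flgT g)))
          (hideL l (.par (.par X₂ Term.nil) Term.nil)) := by
        refine wtau_trans W1 ?_
        refine Relation.ReflTransGen.tail (Relation.ReflTransGen.single
          (hide_step_intro l t1 (fun c _ => tau_names_empty c)))
          (hide_step_intro l t2 (fun c _ => tau_names_empty c))
      have hdead : ¬ Obs (hideL l (.par (.par X₂ Term.nil) Term.nil)) := by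
        apply hide_dead
        intro z hz
        rcases hz with (hz | hz) | hz
        · exact hX₂ hz
        · exact absurd hz (by simp [anames])
        · exact absurd hz (by simp [anames])
      exact hdead (hSO _ WF)
  | bout a b =>
      have hb : b ∈ {x | x ∈ l} := hlab (by simp [Act.names, Label.names])
      have hbg : b ≠ g := fun h => hgl (h ▸ hb)
      have st : Step (trgFor (.bout a b) g) (.lab (.inp a b)) ((gtermT g).subst1 0 b) :=
        Step.inp (Ts := fun _ => gtermT g) 0 b
      rw [gterm_subst] at st
      have t1 : Tau (.par (.par X₁ (trgFor (.bout a b) g)) (flgT g))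
          (.par (.res b (.par X₂ (gtermT g))) (flgT g)) :=
        Step.parL (Step.closeR hs st)
      have gout : Step (.res b (.par X₂ (gtermT g))) (.lab (.out g g))
          (.res b (.par X₂ Term.nil)) := by
        refine Step.resStep (Step.parR gterm_out) ?_
        simp [Act.names, Label.names]
        exact hbg
      have t2 : Tau (.par (.res b (.par X₂ (gtermT g))) (flgT g))
          (.par (.res b (.par X₂ Term.nil)) Term.nil) :=
        Step.commR gout flg_inp
      have WF : WeakTau (hideL l (.par (.par X (trgFor (.bout a b) g)) (flgT g)))
          (hideL l (.par (.res b (.par X₂ Term.nil)) Term.nil)) := by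
        refine wtau_trans W1 ?_
        refine Relation.ReflTransGen.tail (Relation.ReflTransGen.single
          (hide_step_intro l t1 (fun c _ => tau_names_empty c)))
          (hide_step_intro l t2 (fun c _ => tau_names_empty c))
      have hdead : ¬ Obs (hideL l (.par (.res b (.par X₂ Term.nil)) Term.nil)) := by
        apply hide_dead
        intro z hz
        rcases hz with hz | hz
        · simp only [anames, Set.mem_insert_iff] at hz
          rcases hz with rfl | hz | hz
          · exact hb
          · exact hX₂ hz
          · exact absurd hz (by simp [anames])
        · exact absurd hz (by simp [anames])
      exact hdead (hSO _ WF)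

lemma label_names_finite (ℓ : Label) : ((Act.lab ℓ).names).Finite := by
  cases ℓ <;> simp [Act.names, Label.names]

lemma trg_proc (ℓ : Label) (g : Name) : IsProc (trgFor ℓ g) := by
  cases ℓ <;>
    simp [IsProc, Closed, trgFor, gtermT, Term.fvar, NV.vars]

lemma flg_proc (g : Name) : IsProc (flgT g) := by
  simp [IsProc, Closed, flgT, Term.fvar, NV.vars]

lemma hide_rel {R : PRel} (hExtR : ∀ P Q c, R P Q → R (.res c P) (.res c Q))
    (l : List Name) {M N : Term} (h : R M N) : R (hideL l M) (hideL l N) := by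
  induction l with
  | nil => exact h
  | cons c l ih => exact hExtR _ _ c (hExtR _ _ c ih)

lemma goodBox_not_obs {R : PRel} (hG : GoodBox R) {P Q : Term} (hR : R P Q)
    (hOP : Obs P) (hNQ : ¬ Obs Q) : False := by
  obtain ⟨hOn, hRefl, hSE, hExtP, hExtR⟩ := hG
  obtain ⟨P₁, ℓ, P₂, hw, hs⟩ := hOP
  set U : Set Name := anames P ∪ anames Q ∪ (Act.lab ℓ).names with hU
  have hUfin : U.Finite :=
    ((anames_finite P).union (anames_finite Q)).union (label_names_finite ℓ)
  set l : List Name := hUfin.toFinset.toList with hldef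
  have hl : ∀ x, x ∈ l ↔ x ∈ U := by
    intro x
    simp [hldef, Set.Finite.mem_toFinset]
  obtain ⟨g, hg⟩ := hUfin.infinite_compl.nonempty
  have hgU : g ∉ U := hg
  have hgl : g ∉ l := fun h => hgU ((hl g).1 h)
  have hsubj : lsubj ℓ ≠ g := by
    intro h
    exact hgU (h ▸ Or.inr (lsubj_mem_names ℓ))
  have hCR : R (hideL l (.par (.par P (trgFor ℓ g)) (flgT g)))
      (hideL l (.par (.par Q (trgFor ℓ g)) (flgT g))) := by
    refine hide_rel hExtR l ?_
    exact hExtP _ _ _ _ (hExtP _ _ _ _ hR (hRefl _ (trg_proc ℓ g))) (hRefl _ (flg_proc g))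
  have hA : StrongObs (hideL l (.par (.par Q (trgFor ℓ g)) (flgT g))) :=
    claimA hgl hsubj hNQ
  have hB : ¬ StrongObs (hideL l (.par (.par P (trgFor ℓ g)) (flgT g))) := by
    refine claimB hw hs ?_ ?_ hgl
    · intro z hz; exact (hl z).2 (Or.inl (Or.inl hz))
    · intro z hz; exact (hl z).2 (Or.inr hz)
  exact hB ((hSE _ _ hCR).2 hA)

lemma goodBox_not_obs' {R : PRel} (hG : GoodBox R) {P Q : Term} (hR : R P Q)
    (hOQ : Obs Q) (hNP : ¬ Obs P) : False := by
  obtain ⟨hOn, hRefl, hSE, hExtP, hExtR⟩ := hG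
  obtain ⟨Q₁, ℓ, Q₂, hw, hs⟩ := hOQ
  set U : Set Name := anames P ∪ anames Q ∪ (Act.lab ℓ).names with hU
  have hUfin : U.Finite :=
    ((anames_finite P).union (anames_finite Q)).union (label_names_finite ℓ)
  set l : List Name := hUfin.toFinset.toList with hldef
  have hl : ∀ x, x ∈ l ↔ x ∈ U := by
    intro x
    simp [hldef, Set.Finite.mem_toFinset]
  obtain ⟨g, hg⟩ := hUfin.infinite_compl.nonempty
  have hgU : g ∉ U := hg
  have hgl : g ∉ l := fun h => hgU ((hl g).1 h)
  have hsubj : lsubj ℓ ≠ g := by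
    intro h
    exact hgU (h ▸ Or.inr (lsubj_mem_names ℓ))
  have hCR : R (hideL l (.par (.par P (trgFor ℓ g)) (flgT g)))
      (hideL l (.par (.par Q (trgFor ℓ g)) (flgT g))) := by
    refine hide_rel hExtR l ?_
    exact hExtP _ _ _ _ (hExtP _ _ _ _ hR (hRefl _ (trg_proc ℓ g))) (hRefl _ (flg_proc g))
  have hA : StrongObs (hideL l (.par (.par P (trgFor ℓ g)) (flgT g))) :=
    claimA hgl hsubj hNP
  have hB : ¬ StrongObs (hideL l (.par (.par Q (trgFor ℓ g)) (flgT g))) := by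
    refine claimB hw hs ?_ ?_ hgl
    · intro z hz; exact (hl z).2 (Or.inl (Or.inr hz))
    · intro z hz; exact (hl z).2 (Or.inr hz)
  exact hB ((hSE _ _ hCR).1 hA)

lemma boxEq_diamondEq {P Q : Term} (h : BoxEq P Q) : DiamondEq P Q := by
  obtain ⟨R, hG, hR⟩ := h
  refine ⟨R, ⟨hG.1, hG.2.1, ?_, hG.2.2.2⟩, hR⟩
  intro A B hAB
  constructor
  · intro hOA
    by_contra hNB
    exact goodBox_not_obs hG hAB hOA hNB
  · intro hOB
    by_contra hNA
    exact goodBox_not_obs' hG hAB hOB hNA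

end Part2b

section Part3
open Term

lemma isProc_par {A B : Term} (h1 : IsProc A) (h2 : IsProc B) : IsProc (.par A B) := by
  simp only [IsProc, Closed, Term.fvar] at *
  rw [h1, h2]; simp

lemma isProc_res {A : Term} (c : Name) (h : IsProc A) : IsProc (.res c A) := h

lemma nil_no_step {μ : Act} {Y : Term} (h : Step .nil μ Y) : False := by cases h

lemma nil_silent : ¬ Obs Term.nil := by
  rintro ⟨X, ℓ, X', hw, hs⟩
  rcases Relation.ReflTransGen.cases_head hw with rfl | ⟨b, hb, _⟩
  · exact nil_no_step hs
  · exact nil_no_step hb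

lemma isProc_nil : IsProc Term.nil := by simp [IsProc, Closed, Term.fvar]

/-- Weak transition with action. -/
def Wk (A : Term) : Act → Term → Prop
  | .tau => fun A' => WeakTau A A'
  | .lab ℓ => fun A' => ∃ A₁, WeakTau A A₁ ∧ Step A₁ (.lab ℓ) A'

lemma wk_of_step {A A' : Term} {μ : Act} (h : Step A μ A') : Wk A μ A' := by
  cases μ with
  | tau => exact Relation.ReflTransGen.single h
  | lab ℓ => exact ⟨A, Relation.ReflTransGen.refl, h⟩

lemma wk_parL {S S' : Term} (T : Term) {μ : Act} (h : Wk S μ S') :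
    Wk (.par S T) μ (.par S' T) := by
  cases μ with
  | tau => exact wtau_parL T h
  | lab ℓ =>
      obtain ⟨A₁, hw, hs⟩ := h
      exact ⟨.par A₁ T, wtau_parL T hw, Step.parL hs⟩

lemma wk_parR {T T' : Term} (S : Term) {μ : Act} (h : Wk T μ T') :
    Wk (.par S T) μ (.par S T') := by
  cases μ with
  | tau => exact wtau_parR S h
  | lab ℓ =>
      obtain ⟨A₁, hw, hs⟩ := h
      exact ⟨.par S A₁, wtau_parR S hw, Step.parR hs⟩

lemma wk_res {T T' : Term} (c : Name) {μ : Act} (hc : c ∉ μ.names) (h : Wk T μ T') :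
    Wk (.res c T) μ (.res c T') := by
  cases μ with
  | tau => exact wtau_res c h
  | lab ℓ =>
      obtain ⟨A₁, hw, hs⟩ := h
      exact ⟨.res c A₁, wtau_res c hw, Step.resStep hs hc⟩

/-- Branching-style witness relation for part 3. -/
inductive R3 : PRel
  | refl {A} : IsProc A → R3 A A
  | dead {A B} : IsProc A → IsProc B → ¬ Obs A → ¬ Obs B → R3 A B
  | par {L M P Q} : R3 L M → R3 P Q → R3 (.par L P) (.par M Q)
  | res {P Q} (c : Name) : R3 P Q → R3 (.res c P) (.res c Q)

lemma R3_symm {A B : Term} (h : R3 A B) : R3 B A := by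
  induction h with
  | refl h => exact R3.refl h
  | dead h1 h2 h3 h4 => exact R3.dead h2 h1 h4 h3
  | par _ _ ih1 ih2 => exact R3.par ih1 ih2
  | res c _ ih => exact R3.res c ih

lemma R3_onProc {A B : Term} (h : R3 A B) : IsProc A ∧ IsProc B := by
  induction h with
  | refl h => exact ⟨h, h⟩
  | dead h1 h2 _ _ => exact ⟨h1, h2⟩
  | par _ _ ih1 ih2 => exact ⟨isProc_par ih1.1 ih2.1, isProc_par ih1.2 ih2.2⟩
  | res c _ ih => exact ⟨isProc_res c ih.1, isProc_res c ih.2⟩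

lemma R3_sim {A B : Term} (h : R3 A B) :
    ∀ {μ B'}, Step B μ B' → ∃ A', Wk A μ A' ∧ R3 A' B' := by
  induction h with
  | @refl A h =>
      intro μ B' hs
      exact ⟨B', wk_of_step hs, R3.refl (isProc_step h hs)⟩
  | @dead A B h1 h2 h3 h4 =>
      intro μ B' hs
      cases μ with
      | tau =>
          exact ⟨A, Relation.ReflTransGen.refl,
            R3.dead h1 (isProc_step h2 hs) h3 (not_obs_of_tau h4 hs)⟩
      | lab ℓ => exact absurd (obs_of_step hs) h4
  | @par L M P Q hLM hPQ ihL ihR =>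
      intro μ B' hs
      cases hs with
      | parR h' =>
          obtain ⟨P', hwk, hr⟩ := ihR h'
          exact ⟨.par L P', wk_parR L hwk, R3.par hLM hr⟩
      | parL h' =>
          obtain ⟨L', hwk, hr⟩ := ihL h'
          exact ⟨.par L' P, wk_parL P hwk, R3.par hr hPQ⟩
      | commL h1 h2 =>
          obtain ⟨L₂, ⟨L₁, hw1, hs1⟩, hr1⟩ := ihL h1
          obtain ⟨P₂, ⟨P₁, hw2, hs2⟩, hr2⟩ := ihR h2
          refine ⟨.par L₂ P₂, ?_, R3.par hr1 hr2⟩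
          exact Relation.ReflTransGen.tail
            (wtau_trans (wtau_parL P hw1) (wtau_parR L₁ hw2)) (Step.commL hs1 hs2)
      | commR h1 h2 =>
          obtain ⟨L₂, ⟨L₁, hw1, hs1⟩, hr1⟩ := ihL h1
          obtain ⟨P₂, ⟨P₁, hw2, hs2⟩, hr2⟩ := ihR h2
          refine ⟨.par L₂ P₂, ?_, R3.par hr1 hr2⟩
          exact Relation.ReflTransGen.tail
            (wtau_trans (wtau_parL P hw1) (wtau_parR L₁ hw2)) (Step.commR hs1 hs2)
      | closeL h1 h2 =>
          obtain ⟨L₂, ⟨L₁, hw1, hs1⟩, hr1⟩ := ihL h1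
          obtain ⟨P₂, ⟨P₁, hw2, hs2⟩, hr2⟩ := ihR h2
          refine ⟨_, ?_, R3.res _ (R3.par hr1 hr2)⟩
          exact Relation.ReflTransGen.tail
            (wtau_trans (wtau_parL P hw1) (wtau_parR L₁ hw2)) (Step.closeL hs1 hs2)
      | closeR h1 h2 =>
          obtain ⟨L₂, ⟨L₁, hw1, hs1⟩, hr1⟩ := ihL h1
          obtain ⟨P₂, ⟨P₁, hw2, hs2⟩, hr2⟩ := ihR h2
          refine ⟨_, ?_, R3.res _ (R3.par hr1 hr2)⟩
          exact Relation.ReflTransGen.tail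
            (wtau_trans (wtau_parL P hw1) (wtau_parR L₁ hw2)) (Step.closeR hs1 hs2)
  | @res P Q c hPQ ih =>
      intro μ B' hs
      cases hs with
      | open_ h' =>
          obtain ⟨P₂, ⟨P₁, hw, hs1⟩, hr⟩ := ih h'
          exact ⟨P₂, ⟨.res c P₁, wtau_res c hw, Step.open_ hs1⟩, hr⟩
      | resStep h' hc =>
          obtain ⟨P', hwk, hr⟩ := ih h'
          exact ⟨.res c P', wk_res c hc hwk, R3.res c hr⟩

lemma R3_track {A B B' : Term} (h : R3 A B) (hw : WeakTau B B') :
    ∃ A', WeakTau A A' ∧ R3 A' B' := by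
  induction hw with
  | refl => exact ⟨A, Relation.ReflTransGen.refl, h⟩
  | tail _ hstep ih =>
      obtain ⟨A', hwA, hr⟩ := ih
      obtain ⟨A'', hwk, hr'⟩ := R3_sim hr hstep
      exact ⟨A'', wtau_trans hwA hwk, hr'⟩

lemma R3_obs {A B : Term} (h : R3 A B) (hO : Obs B) : Obs A := by
  obtain ⟨B₁, ℓ, B₂, hw, hs⟩ := hO
  obtain ⟨A₁, hwA, hr⟩ := R3_track h hw
  obtain ⟨A₂, ⟨A₁', hw', hs'⟩, _⟩ := R3_sim hr hs
  exact ⟨A₁', ℓ, A₂, wtau_trans hwA hw', hs'⟩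

lemma R3_goodBox : GoodBox R3 := by
  refine ⟨fun P Q h => R3_onProc h, fun P h => R3.refl h, ?_, ?_, ?_⟩
  · intro A B hAB
    constructor
    · intro hSA B' hwB
      obtain ⟨A', hwA, hr⟩ := R3_track hAB hwB
      exact R3_obs (R3_symm hr) (hSA A' hwA)
    · intro hSB A' hwA
      obtain ⟨B', hwB, hr⟩ := R3_track (R3_symm hAB) hwA
      exact R3_obs (R3_symm hr) (hSB B' hwB)
  · intro L M P Q h1 h2; exact R3.par h1 h2
  · intro P Q c h; exact R3.res c h

/-- The silent divergent process `(c)(c)(!c̄c.0 | !c(x).0)`. -/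
def Mdiv : Term := .par (.repOut (.nm 1) (.nm 1) .nil) (.repInp (.nm 1) 0 .nil)
def Qdiv : Term := .res 1 (.res 1 Mdiv)

lemma Qdiv_silent : ¬ Obs Qdiv := by
  have : ¬ Obs (hideL [1] Mdiv) := by
    apply hide_dead
    intro z hz
    simp only [Mdiv, anames, NV.names] at hz
    simp only [Set.mem_union, Set.mem_singleton_iff, Set.mem_empty_iff_false,
      or_false] at hz
    rcases hz with (hz | hz) | hz <;> simp [hz]
  exact this

lemma isProc_Qdiv : IsProc Qdiv := by
  simp [IsProc, Closed, Qdiv, Mdiv, Term.fvar, NV.vars]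

lemma boxEq_nil_Qdiv : BoxEq Term.nil Qdiv :=
  ⟨R3, R3_goodBox, R3.dead isProc_nil isProc_Qdiv nil_silent Qdiv_silent⟩

def Sdiv : ℕ → Term
  | 0 => .repOut (.nm 1) (.nm 1) .nil
  | n + 1 => .par .nil (Sdiv n)

def Tdiv : ℕ → Term
  | 0 => .repInp (.nm 1) 0 .nil
  | n + 1 => .par (Term.subst1 0 1 .nil) (Tdiv n)

lemma Sdiv_step (n : ℕ) : Step (Sdiv n) (.lab (.out 1 1)) (Sdiv (n + 1)) := by
  induction n with
  | zero => exact Step.repOutStep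
  | succ n ih => exact Step.parR ih

lemma Tdiv_step (n : ℕ) : Step (Tdiv n) (.lab (.inp 1 1)) (Tdiv (n + 1)) := by
  induction n with
  | zero => exact Step.repInpStep 1
  | succ n ih => exact Step.parR ih

def fdiv (n : ℕ) : Term := .res 1 (.res 1 (.par (Sdiv n) (Tdiv n)))

lemma fdiv_zero : fdiv 0 = Qdiv := rfl

lemma fdiv_tau : TauSeq fdiv := by
  intro n
  exact Step.resStep (Step.resStep (Step.commR (Sdiv_step n) (Tdiv_step n))
    (tau_names_empty 1)) (tau_names_empty 1)

lemma not_absEq_nil_Qdiv : ¬ AbsEq Term.nil Qdiv := by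
  rintro ⟨R, ⟨_, _, _, _, hCo, _⟩, hR⟩
  obtain ⟨k, _, P', ⟨P₀, hTau, _⟩, _⟩ := (hCo _ _ hR).1 fdiv fdiv_zero fdiv_tau
  exact nil_no_step hTau

end Part3

section Part4
open Term

/-- `ā a.0` with `a = 0`. -/
def outA : Term := .out (.nm 0) 1 (fun _ => .nm 0) (fun _ => .nil)
def Ctrm : Term := .out (.nm 1) 1 (fun _ => .nm 1) (fun _ => .nil)
def Itrm : Term := .inp (.nm 1) 0 2 (fun i => if i = 0 then outA else .nil)
def P4 : Term := .res 1 (.res 1 (.par Ctrm Itrm))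
def M1 : Term := .res 1 (.res 1 (.par .nil outA))
def M2 : Term := .res 1 (.res 1 (.par .nil .nil))

lemma outA_subst : Term.subst1 0 1 outA = outA := by
  simp [outA, Term.subst1, Term.applyVar, NV.sub]

lemma M2_dead : ¬ Obs M2 := by
  have : ¬ Obs (hideL [1] (.par .nil .nil)) := by
    apply hide_dead
    intro z hz
    simp [anames] at hz
  exact this

lemma step_Q4_inv {μ : Act} {Y : Term}
    (h : Step (Term.out (.nm 0) 1 (fun _ => .nm 0) (fun _ => .nil)) μ Y) :
    μ = .lab (.out 0 0) ∧ Y = Term.nil := by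
  cases h with
  | @out a k ms Ts i c hms =>
      have h0 : (0 : Name) = c := by
        have h1 : NV.nm (0 : Name) = NV.nm c := hms
        injection h1
      subst h0
      exact ⟨rfl, rfl⟩

lemma step_M1_inv {μ : Act} {Y : Term}
    (h : Step (Term.res 1 (.res 1 (.par .nil
      (Term.out (.nm 0) 1 (fun _ => .nm 0) (fun _ => .nil))))) μ Y) :
    μ = .lab (.out 0 0) ∧ Y = M2 := by
  cases h with
  | open_ h' =>
      cases h' with
      | resStep h'' hc => simp [Act.names, Label.names] at hc
  | resStep h' hc =>
      cases h' with
      | open_ h'' => simp [Act.names, Label.names] at hc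
      | resStep h'' hc2 =>
          cases h'' with
          | parL h3 => cases h3
          | parR h3 =>
              obtain ⟨h4, h5⟩ := step_Q4_inv h3
              subst h4
              subst h5
              exact ⟨rfl, rfl⟩
          | commL h3 h4 => cases h3
          | commR h3 h4 => cases h3
          | closeL h3 h4 => cases h3
          | closeR h3 h4 => cases h3

lemma step_P4_inv {μ : Act} {Y : Term}
    (h : Step (Term.res 1 (.res 1 (.par
      (Term.out (.nm 1) 1 (fun _ => .nm 1) (fun _ => .nil))
      (Term.inp (.nm 1) 0 2 (fun i => if i = 0 then outA else .nil))))) μ Y) :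
    μ = .tau ∧ (Y = M1 ∨ Y = M2) := by
  cases h with
  | open_ h' =>
      cases h' with
      | resStep h'' hc => simp [Act.names, Label.names] at hc
  | resStep h' hc =>
      cases h' with
      | open_ h'' => simp [Act.names, Label.names] at hc
      | resStep h'' hc2 =>
          cases h'' with
          | parL h3 =>
              cases h3 with
              | out i hms =>
                  simp only [NV.nm.injEq] at hms
                  subst hms
                  simp [Act.names, Label.names] at hc2
          | parR h3 =>
              cases h3 with
              | inp i c => simp [Act.names, Label.names] at hc2
          | commL h3 h4 => cases h3
          | commR h3 h4 =>
              cases h3 with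
              | out i hms =>
                  simp only [NV.nm.injEq] at hms
                  subst hms
                  cases h4 with
                  | inp i' c' =>
                      refine ⟨rfl, ?_⟩
                      fin_cases i' <;> simp [M1, M2, outA, NV.sub, Term.subst1, Term.applyVar]
          | closeL h3 h4 => cases h3
          | closeR h3 h4 => cases h3

lemma step_Ctrm : Step Ctrm (.lab (.out 1 1)) Term.nil := Step.out 0 rfl

lemma step_Itrm_0 : Step Itrm (.lab (.inp 1 1)) outA := by
  have h := Step.inp (a := 1) (x := 0)
    (Ts := fun i : Fin 2 => if i = 0 then outA else Term.nil) 0 1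
  simpa [Itrm, outA_subst] using h

lemma step_Itrm_1 : Step Itrm (.lab (.inp 1 1)) Term.nil := by
  have h := Step.inp (a := 1) (x := 0)
    (Ts := fun i : Fin 2 => if i = 0 then outA else Term.nil) 1 1
  simpa [Itrm, Term.subst1, Term.applyVar] using h

lemma n1_tau : (1 : Name) ∉ (Act.tau).names := by simp [Act.names]

lemma tau_P4_M1 : Tau P4 M1 :=
  Step.resStep (Step.resStep (Step.commR step_Ctrm step_Itrm_0) n1_tau) n1_tau

lemma tau_P4_M2 : Tau P4 M2 :=
  Step.resStep (Step.resStep (Step.commR step_Ctrm step_Itrm_1) n1_tau) n1_tau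

lemma step_M1_out : Step M1 (.lab (.out 0 0)) M2 := by
  have h1 : (1 : Name) ∉ (Act.lab (.out 0 0)).names := by
    simp [Act.names, Label.names]
  exact Step.resStep (Step.resStep (Step.parR (Step.out 0 rfl)) h1) h1

lemma step_Q4_out : Step outA (.lab (.out 0 0)) Term.nil := Step.out 0 rfl

/-- One-way weak simulation used to establish equipollence under contexts. -/
inductive Sim : PRel
  | refl (A) : Sim A A
  | deadL {A} (B) : ¬ Obs A → Sim A B
  | pq : Sim P4 outA
  | qp : Sim outA P4
  | mq : Sim M1 outA
  | qm : Sim outA M1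
  | spar {L M P Q} : Sim L M → Sim P Q → Sim (.par L P) (.par M Q)
  | sres {P Q} (c : Name) : Sim P Q → Sim (.res c P) (.res c Q)

lemma sim_step {A B : Term} (h : Sim A B) :
    ∀ {μ A'}, Step A μ A' → ∃ B', Wk B μ B' ∧ Sim A' B' := by
  induction h with
  | refl A =>
      intro μ A' hs
      exact ⟨A', wk_of_step hs, Sim.refl A'⟩
  | @deadL A B hNA =>
      intro μ A' hs
      cases μ with
      | tau => exact ⟨B, Relation.ReflTransGen.refl, Sim.deadL B (not_obs_of_tau hNA hs)⟩
      | lab ℓ => exact absurd (obs_of_step hs) hNA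
  | pq =>
      intro μ A' hs
      obtain ⟨rfl, hY⟩ := step_P4_inv hs
      rcases hY with rfl | rfl
      · exact ⟨outA, Relation.ReflTransGen.refl, Sim.mq⟩
      · exact ⟨outA, Relation.ReflTransGen.refl, Sim.deadL outA M2_dead⟩
  | qp =>
      intro μ A' hs
      obtain ⟨rfl, rfl⟩ := step_Q4_inv hs
      exact ⟨M2, ⟨M1, Relation.ReflTransGen.single tau_P4_M1, step_M1_out⟩,
        Sim.deadL M2 nil_silent⟩
  | mq =>
      intro μ A' hs
      obtain ⟨rfl, rfl⟩ := step_M1_inv hs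
      exact ⟨Term.nil, wk_of_step step_Q4_out, Sim.deadL Term.nil M2_dead⟩
  | qm =>
      intro μ A' hs
      obtain ⟨rfl, rfl⟩ := step_Q4_inv hs
      exact ⟨M2, ⟨M1, Relation.ReflTransGen.refl, step_M1_out⟩, Sim.deadL M2 nil_silent⟩
  | @spar L M P Q hLM hPQ ihL ihR =>
      intro μ A' hs
      cases hs with
      | parR h' =>
          obtain ⟨P', hwk, hr⟩ := ihR h'
          exact ⟨.par M P', wk_parR M hwk, Sim.spar hLM hr⟩
      | parL h' =>
          obtain ⟨L', hwk, hr⟩ := ihL h'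
          exact ⟨.par L' Q, wk_parL Q hwk, Sim.spar hr hPQ⟩
      | commL h1 h2 =>
          obtain ⟨L₂, ⟨L₁, hw1, hs1⟩, hr1⟩ := ihL h1
          obtain ⟨P₂, ⟨P₁, hw2, hs2⟩, hr2⟩ := ihR h2
          refine ⟨.par L₂ P₂, ?_, Sim.spar hr1 hr2⟩
          exact Relation.ReflTransGen.tail
            (wtau_trans (wtau_parL Q hw1) (wtau_parR L₁ hw2)) (Step.commL hs1 hs2)
      | commR h1 h2 =>
          obtain ⟨L₂, ⟨L₁, hw1, hs1⟩, hr1⟩ := ihL h1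
          obtain ⟨P₂, ⟨P₁, hw2, hs2⟩, hr2⟩ := ihR h2
          refine ⟨.par L₂ P₂, ?_, Sim.spar hr1 hr2⟩
          exact Relation.ReflTransGen.tail
            (wtau_trans (wtau_parL Q hw1) (wtau_parR L₁ hw2)) (Step.commR hs1 hs2)
      | closeL h1 h2 =>
          obtain ⟨L₂, ⟨L₁, hw1, hs1⟩, hr1⟩ := ihL h1
          obtain ⟨P₂, ⟨P₁, hw2, hs2⟩, hr2⟩ := ihR h2
          refine ⟨_, ?_, Sim.sres _ (Sim.spar hr1 hr2)⟩
          exact Relation.ReflTransGen.tail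
            (wtau_trans (wtau_parL Q hw1) (wtau_parR L₁ hw2)) (Step.closeL hs1 hs2)
      | closeR h1 h2 =>
          obtain ⟨L₂, ⟨L₁, hw1, hs1⟩, hr1⟩ := ihL h1
          obtain ⟨P₂, ⟨P₁, hw2, hs2⟩, hr2⟩ := ihR h2
          refine ⟨_, ?_, Sim.sres _ (Sim.spar hr1 hr2)⟩
          exact Relation.ReflTransGen.tail
            (wtau_trans (wtau_parL Q hw1) (wtau_parR L₁ hw2)) (Step.closeR hs1 hs2)
  | @sres P Q c hPQ ih =>
      intro μ A' hs
      cases hs with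
      | open_ h' =>
          obtain ⟨P₂, ⟨P₁, hw, hs1⟩, hr⟩ := ih h'
          exact ⟨P₂, ⟨.res c P₁, wtau_res c hw, Step.open_ hs1⟩, hr⟩
      | resStep h' hc =>
          obtain ⟨P', hwk, hr⟩ := ih h'
          exact ⟨.res c P', wk_res c hc hwk, Sim.sres c hr⟩

lemma sim_track {A B A' : Term} (h : Sim A B) (hw : WeakTau A A') :
    ∃ B', WeakTau B B' ∧ Sim A' B' := by
  induction hw with
  | refl => exact ⟨B, Relation.ReflTransGen.refl, h⟩
  | tail _ hstep ih =>
      obtain ⟨B', hwB, hr⟩ := ih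
      obtain ⟨B'', hwk, hr'⟩ := sim_step hr hstep
      exact ⟨B'', wtau_trans hwB hwk, hr'⟩

lemma sim_obs {A B : Term} (h : Sim A B) (hO : Obs A) : Obs B := by
  obtain ⟨A₁, ℓ, A₂, hw, hs⟩ := hO
  obtain ⟨B₁, hwB, hr⟩ := sim_track h hw
  obtain ⟨B₂, ⟨B₁', hw', hs'⟩, _⟩ := sim_step hr hs
  exact ⟨B₁', ℓ, B₂, wtau_trans hwB hw', hs'⟩

def R4 (A B : Term) : Prop := IsProc A ∧ IsProc B ∧ Sim A B ∧ Sim B A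

lemma isProc_outA : IsProc outA := by
  simp [IsProc, Closed, outA, Term.fvar, NV.vars]

lemma isProc_P4 : IsProc P4 := by
  have h : ∀ i : Fin 2, Term.fvar (if i = 0 then outA else Term.nil) = ∅ := by
    intro i
    split <;> simp [outA, Term.fvar, NV.vars]
  simp [IsProc, Closed, P4, Ctrm, Itrm, Term.fvar, NV.vars, h]

lemma R4_goodDia : GoodDia R4 := by
  refine ⟨fun P Q h => ⟨h.1, h.2.1⟩, fun P h => ⟨h, h, Sim.refl P, Sim.refl P⟩, ?_, ?_, ?_⟩
  · intro A B h
    exact ⟨fun hO => sim_obs h.2.2.1 hO, fun hO => sim_obs h.2.2.2 hO⟩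
  · intro L M P Q h1 h2
    exact ⟨isProc_par h1.1 h2.1, isProc_par h1.2.1 h2.2.1,
      Sim.spar h1.2.2.1 h2.2.2.1, Sim.spar h1.2.2.2 h2.2.2.2⟩
  · intro P Q c h
    exact ⟨isProc_res c h.1, isProc_res c h.2.1,
      Sim.sres c h.2.2.1, Sim.sres c h.2.2.2⟩

lemma diamondEq_P4_outA : DiamondEq P4 outA :=
  ⟨R4, R4_goodDia, isProc_P4, isProc_outA, Sim.pq, Sim.qp⟩

lemma strongObs_outA : StrongObs outA := by
  intro X hw
  rcases Relation.ReflTransGen.cases_head hw with rfl | ⟨b, hb, _⟩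
  · exact obs_of_step step_Q4_out
  · obtain ⟨h1, _⟩ := step_Q4_inv hb
    cases h1

lemma not_boxEq_P4_outA : ¬ BoxEq P4 outA := by
  rintro ⟨R, ⟨_, _, hSE, _⟩, hR⟩
  have hNSP : ¬ StrongObs P4 := fun hS =>
    M2_dead (hS M2 (Relation.ReflTransGen.single tau_P4_M2))
  exact hNSP ((hSE _ _ hR).2 strongObs_outA)

end Part4

/-- the inclusions = ⊆ =_□ ⊆ =_◇ hold and both are strict. -/
theorem abs_box_diamond_strict_inclusions :
    (∀ P Q : Term, AbsEq P Q → BoxEq P Q) ∧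
    (∀ P Q : Term, BoxEq P Q → DiamondEq P Q) ∧
    (∃ P Q : Term, BoxEq P Q ∧ ¬ AbsEq P Q) ∧
    (∃ P Q : Term, DiamondEq P Q ∧ ¬ BoxEq P Q) :=
  ⟨fun _ _ h => absEq_boxEq h, fun _ _ h => boxEq_diamondEq h,
    ⟨Term.nil, Qdiv, boxEq_nil_Qdiv, not_absEq_nil_Qdiv⟩,
    ⟨P4, outA, diamondEq_P4_outA, not_boxEq_P4_outA⟩⟩
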